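/- arXiv:0712.2957 — 2 statements merged into one kernel-verified Lean document; each statement's English description precedes it below -/
import Mathlib

section
/- For n ≥ 0 the function uₙ(x) = (A x^q D⁻¹ + k₀)ⁿ 1 (with D⁻¹ integration from 0, A ≠ 0, q > -1) is given explicitly by uₙ(x) = Σ_{j=0}^{n} C(n,j) k₀^{n-j} A^j x^{j(q+1)} / ∏_{i=1}^{j-1}(i·q + i + 1), where the empty product (j = 0, 1) equals 1 and the denominator product is (q+2)(2q+3)···((j-1)q+j). -/
open intervalIntegral Finset

noncomputable def Mop (A q k₀ : ℝ) (f : ℝ → ℝ) : ℝ → ℝ :=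
  fun x => A * x ^ q * (∫ t in (0 : ℝ)..x, f t) + k₀ * f x

theorem key (A q k₀ : ℝ) (hq : -1 < q) :
    ∀ n : ℕ, ∀ x : ℝ, 0 < x → ((Mop A q k₀)^[n] (fun _ => 1)) x =
      ∑ j ∈ Finset.range (n + 1), (n.choose j : ℝ) * k₀ ^ (n - j) *
        A ^ j * x ^ ((j : ℝ) * (q + 1)) /
        (∏ i ∈ Finset.Icc 1 (j - 1), ((i : ℝ) * q + i + 1)) := by
  have hq1 : (0:ℝ) < q + 1 := by linarith
  set P : ℕ → ℝ := fun j => ∏ i ∈ Finset.Icc 1 (j - 1), ((i : ℝ) * q + i + 1) with hPdef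
  have he : ∀ j : ℕ, (-1:ℝ) < (j:ℝ) * (q+1) :=
    fun j => lt_of_lt_of_le (by norm_num) (mul_nonneg (Nat.cast_nonneg j) hq1.le)
  have hP : ∀ j : ℕ, P (j+1) = P j * ((j:ℝ) * (q+1) + 1) := by
    intro j
    cases j with
    | zero => simp [P]
    | succ m =>
      show (∏ i ∈ Finset.Icc 1 (m+1), ((i : ℝ) * q + i + 1)) = _
      rw [Finset.prod_Icc_succ_top (Nat.succ_le_succ (Nat.zero_le m))]
      simp only [P, Nat.add_sub_cancel]
      push_cast
      ring
  intro n
  induction n with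
  | zero =>
    intro x hx
    simp [P]
  | succ n ih =>
    intro x hx
    rw [Function.iterate_succ_apply']
    simp only [Mop]
    have hI : ∀ j : ℕ, ∫ t in (0:ℝ)..x, t ^ ((j:ℝ)*(q+1)) =
        x ^ ((j:ℝ)*(q+1)+1) / ((j:ℝ)*(q+1)+1) := by
      intro j
      rw [integral_rpow (Or.inl (he j)), Real.zero_rpow (by have := he j; positivity), sub_zero]
    set B : ℕ → ℝ := fun j => k₀ ^ (n + 1 - j) * A ^ j * x ^ ((j:ℝ)*(q+1)) / P j with hB
    have hcongr : (∫ t in (0:ℝ)..x, ((Mop A q k₀)^[n] (fun _ => 1)) t)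
        = ∫ t in (0:ℝ)..x, ∑ j ∈ Finset.range (n + 1),
            (n.choose j : ℝ) * k₀ ^ (n - j) * A ^ j * t ^ ((j : ℝ) * (q + 1)) / P j := by
      apply intervalIntegral.integral_congr_ae
      filter_upwards with t ht
      rw [Set.uIoc_of_le hx.le] at ht
      exact ih t ht.1
    have hsum : (∫ t in (0:ℝ)..x, ∑ j ∈ Finset.range (n + 1),
            (n.choose j : ℝ) * k₀ ^ (n - j) * A ^ j * t ^ ((j : ℝ) * (q + 1)) / P j)
        = ∑ j ∈ Finset.range (n + 1), (n.choose j : ℝ) * k₀ ^ (n - j) * A ^ j *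
            (x ^ ((j:ℝ)*(q+1)+1) / ((j:ℝ)*(q+1)+1)) / P j := by
      rw [intervalIntegral.integral_finset_sum]
      · exact Finset.sum_congr rfl fun j _ => by
          rw [intervalIntegral.integral_div, intervalIntegral.integral_const_mul, hI j]
      · intro j _
        exact ((intervalIntegrable_rpow' (he j)).const_mul _).div_const _
    rw [hcongr, hsum, ih x hx]
    have h1 : A * x ^ q * (∑ j ∈ Finset.range (n + 1), (n.choose j : ℝ) * k₀ ^ (n - j) * A ^ j *
            (x ^ ((j:ℝ)*(q+1)+1) / ((j:ℝ)*(q+1)+1)) / P j)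
        = ∑ j ∈ Finset.range (n + 1), (n.choose j : ℝ) * B (j+1) := by
      rw [Finset.mul_sum]
      refine Finset.sum_congr rfl fun j _ => ?_
      simp only [hB]
      rw [hP j, Nat.succ_sub_succ]
      have hx1 : x ^ (((j+1:ℕ):ℝ) * (q+1)) = x ^ q * x ^ ((j:ℝ)*(q+1)+1) := by
        rw [← Real.rpow_add hx]
        congr 1
        push_cast
        ring
      rw [hx1, ← div_div]
      ring
    have h2 : k₀ * (∑ j ∈ Finset.range (n + 1), (n.choose j : ℝ) * k₀ ^ (n - j) *
            A ^ j * x ^ ((j : ℝ) * (q + 1)) /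
            (∏ i ∈ Finset.Icc 1 (j - 1), ((i : ℝ) * q + i + 1)))
        = ∑ j ∈ Finset.range (n + 1), (n.choose j : ℝ) * B j := by
      rw [Finset.mul_sum]
      refine Finset.sum_congr rfl fun j hj => ?_
      simp only [hB, hPdef]
      rw [Nat.succ_sub (Nat.lt_succ_iff.mp (Finset.mem_range.mp hj)), pow_succ]
      ring
    rw [h1, h2]
    have hR : ∑ j ∈ Finset.range (n + 1 + 1), ((n+1).choose j : ℝ) * k₀ ^ (n + 1 - j) *
            A ^ j * x ^ ((j : ℝ) * (q + 1)) /
            (∏ i ∈ Finset.Icc 1 (j - 1), ((i : ℝ) * q + i + 1))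
        = ∑ j ∈ Finset.range (n + 1 + 1), ((n+1).choose j : ℝ) * B j := by
      refine Finset.sum_congr rfl fun j _ => ?_
      simp only [hB, hPdef]
      ring
    rw [hR]
    rw [Finset.sum_range_succ' (fun j => ((n+1).choose j : ℝ) * B j) (n+1)]
    simp only [Nat.choose_succ_succ, Nat.choose_zero_right, Nat.cast_add, Nat.cast_one,
      Nat.cast_ofNat, add_mul, one_mul]
    rw [Finset.sum_add_distrib]
    rw [Finset.sum_range_succ' (fun j => (n.choose j : ℝ) * B j) n]
    rw [Finset.sum_range_succ (fun j => (n.choose (j+1) : ℝ) * B (j+1)) n]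
    simp [Nat.choose_succ_self]
    ring

/-- explicit formula
`uₙ(x) = Σ_{j=0}^n C(n,j) k₀^{n-j} A^j x^{j(q+1)} / ∏_{i=1}^{j-1} (i q + i + 1)`
for `uₙ = (A x^q D⁻¹ + k₀)ⁿ 1`. -/
theorem stmt6 (A q k₀ : ℝ) (hA : A ≠ 0) (hq : -1 < q) (n : ℕ) (x : ℝ) (hx : 0 < x) :
    ((Mop A q k₀)^[n] (fun _ => 1)) x =
      ∑ j ∈ Finset.range (n + 1), (n.choose j : ℝ) * k₀ ^ (n - j) *
        A ^ j * x ^ ((j : ℝ) * (q + 1)) /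
        (∏ i ∈ Finset.Icc 1 (j - 1), ((i : ℝ) * q + i + 1)) := by
  exact key A q k₀ hq n x hx
end

section
/- Fix A ≠ 0, q > -1. For y ≠ 0 define πₙ(x,y) = (A x^q D⁻¹ + y)ⁿ 1 where D⁻¹ is integration from 0. Then πₙ, as a function of the two variables (x,y), satisfies ∂πₙ/∂y = (1/(A(q+1))) D_x (x^{1-q} D_x πₙ), i.e., πₙ is a polynomial-type solution of the variable-conductivity heat equation with y playing the role of time. -/
open intervalIntegral

/-- The two-variable monomials `πₙ(x,y) = (A x^q D⁻¹ + y)ⁿ 1`. -/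
noncomputable def piMon (A q : ℝ) : ℕ → ℝ → ℝ → ℝ
  | 0, _, _ => 1
  | n + 1, x, y =>
      A * x ^ q * (∫ t in (0 : ℝ)..x, piMon A q n t y) + y * piMon A q n x y

namespace Stmt18Aux

/-- The denominators `c_j = 1·(q+2)(2q+3)⋯((j-1)q+j)`. -/
noncomputable def cden (q : ℝ) : ℕ → ℝ
  | 0 => 1
  | j + 1 => cden q j * ((j : ℝ) * (q + 1) + 1)

/-- `K_j(x) = A^j x^{j(q+1)} / c_j`. -/
noncomputable def KK (A q : ℝ) (j : ℕ) (x : ℝ) : ℝ :=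
  A ^ j / cden q j * x ^ ((j : ℝ) * (q + 1))

/-- Explicit formula for `πₙ`. -/
noncomputable def FF (A q : ℝ) (n : ℕ) (x y : ℝ) : ℝ :=
  ∑ j ∈ Finset.range (n + 1), (n.choose j : ℝ) * y ^ (n - j) * KK A q j x

lemma fac_pos {q : ℝ} (hq : -1 < q) (j : ℕ) : 0 < (j : ℝ) * (q + 1) + 1 := by
  have h1 : (0 : ℝ) ≤ (j : ℝ) * (q + 1) :=
    mul_nonneg (Nat.cast_nonneg j) (by linarith)
  linarith

lemma cden_pos {q : ℝ} (hq : -1 < q) : ∀ j, 0 < cden q j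
  | 0 => one_pos
  | j + 1 => mul_pos (cden_pos hq j) (fac_pos hq j)

lemma choose_id (n j : ℕ) (hj : j ≤ n) :
    (n + 1).choose j * (n + 1 - j) = (n + 1) * n.choose j := by
  have h1 : (n + 1).choose j = (n + 1).choose (n + 1 - j) :=
    (Nat.choose_symm (by omega)).symm
  have h2 : n + 1 - j = (n - j) + 1 := by omega
  rw [h1, h2]
  have h3 := Nat.add_one_mul_choose_eq n (n - j)
  rw [Nat.choose_symm hj] at h3
  simpa using h3.symm

lemma piMon_eq (A : ℝ) {q : ℝ} (hq : -1 < q) :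
    ∀ (n : ℕ) (y : ℝ) {x : ℝ}, 0 < x → piMon A q n x y = FF A q n x y := by
  intro n
  induction n with
  | zero =>
      intro y x hx
      simp [piMon, FF, KK, cden]
  | succ n ih =>
      intro y x hx
      have hq1 : (0 : ℝ) < q + 1 := by linarith
      -- rewrite the integrand using the induction hypothesis
      have hIeq : (∫ t in (0 : ℝ)..x, piMon A q n t y)
          = ∫ t in (0 : ℝ)..x, FF A q n t y := by
        apply intervalIntegral.integral_congr_ae
        apply MeasureTheory.ae_of_all
        intro t ht
        rw [Set.uIoc_of_le hx.le] at ht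
        exact ih y ht.1
      -- each term of the sum rewritten as constant times rpow
      have hfun : ∀ j : ℕ,
          (fun t : ℝ => (n.choose j : ℝ) * y ^ (n - j) * KK A q j t)
            = fun t : ℝ => ((n.choose j : ℝ) * y ^ (n - j) * (A ^ j / cden q j))
                * t ^ ((j : ℝ) * (q + 1)) := by
        intro j; funext t; simp only [KK]; ring
      have hInt : ∀ j ∈ Finset.range (n + 1),
          IntervalIntegrable
            (fun t : ℝ => (n.choose j : ℝ) * y ^ (n - j) * KK A q j t)
            MeasureTheory.volume 0 x := by
        intro j _
        have hr : (-1 : ℝ) < (j : ℝ) * (q + 1) := by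
          have := fac_pos hq j; linarith
        rw [hfun j]
        exact (intervalIntegral.intervalIntegrable_rpow' hr).const_mul _
      have hterm : ∀ j : ℕ,
          (∫ t in (0 : ℝ)..x, (n.choose j : ℝ) * y ^ (n - j) * KK A q j t)
            = (n.choose j : ℝ) * y ^ (n - j) * (A ^ j / cden q j)
                * (x ^ ((j : ℝ) * (q + 1) + 1) / ((j : ℝ) * (q + 1) + 1)) := by
        intro j
        have hr : (-1 : ℝ) < (j : ℝ) * (q + 1) := by
          have := fac_pos hq j; linarith
        rw [hfun j, intervalIntegral.integral_const_mul,
          integral_rpow (Or.inl hr),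
          Real.zero_rpow (ne_of_gt (fac_pos hq j))]
        ring
      have hFFn : (∫ t in (0 : ℝ)..x, FF A q n t y)
          = ∑ j ∈ Finset.range (n + 1),
              (n.choose j : ℝ) * y ^ (n - j) * (A ^ j / cden q j)
                * (x ^ ((j : ℝ) * (q + 1) + 1) / ((j : ℝ) * (q + 1) + 1)) := by
        simp only [FF]
        rw [intervalIntegral.integral_finset_sum hInt]
        exact Finset.sum_congr rfl fun j _ => hterm j
      -- now the algebraic identity
      show A * x ^ q * (∫ t in (0 : ℝ)..x, piMon A q n t y) + y * piMon A q n x y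
          = FF A q (n + 1) x y
      rw [hIeq, hFFn, ih y hx]
      -- RHS: split off the `j = 0` term and use Pascal's rule
      have hsplit : FF A q (n + 1) x y
          = (∑ j ∈ Finset.range (n + 1),
              ((n + 1).choose (j + 1) : ℝ) * y ^ (n + 1 - (j + 1)) * KK A q (j + 1) x)
            + ((n + 1).choose 0 : ℝ) * y ^ (n + 1 - 0) * KK A q 0 x := by
        simp only [FF]
        rw [Finset.sum_range_succ' (fun j => ((n + 1).choose j : ℝ) * y ^ (n + 1 - j) * KK A q j x) (n + 1)]
      rw [hsplit]
      have hK0 : KK A q 0 x = 1 := by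
        simp [KK, cden]
      have hPascal : ∀ j : ℕ,
          (((n + 1).choose (j + 1) : ℝ)) = (n.choose j : ℝ) + (n.choose (j + 1) : ℝ) := by
        intro j
        rw [Nat.choose_succ_succ]
        push_cast
        ring
      have hsplit2 : (∑ j ∈ Finset.range (n + 1),
              ((n + 1).choose (j + 1) : ℝ) * y ^ (n + 1 - (j + 1)) * KK A q (j + 1) x)
          = (∑ j ∈ Finset.range (n + 1),
              (n.choose j : ℝ) * y ^ (n - j) * KK A q (j + 1) x)
            + (∑ j ∈ Finset.range (n + 1),
              (n.choose (j + 1) : ℝ) * y ^ (n - j) * KK A q (j + 1) x) := by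
        rw [← Finset.sum_add_distrib]
        refine Finset.sum_congr rfl fun j _ => ?_
        rw [hPascal j, Nat.succ_sub_succ]
        ring
      rw [hsplit2]
      -- first piece: the integral part
      have hpart1 : A * x ^ q * (∑ j ∈ Finset.range (n + 1),
              (n.choose j : ℝ) * y ^ (n - j) * (A ^ j / cden q j)
                * (x ^ ((j : ℝ) * (q + 1) + 1) / ((j : ℝ) * (q + 1) + 1)))
          = ∑ j ∈ Finset.range (n + 1),
              (n.choose j : ℝ) * y ^ (n - j) * KK A q (j + 1) x := by
        rw [Finset.mul_sum]
        refine Finset.sum_congr rfl fun j _ => ?_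
        have hxp : x ^ q * x ^ ((j : ℝ) * (q + 1) + 1)
            = x ^ ((((j : ℕ) + 1 : ℕ) : ℝ) * (q + 1)) := by
          rw [← Real.rpow_add hx]
          congr 1
          push_cast
          ring
        simp only [KK, cden]
        rw [← hxp]
        have h1 : cden q j ≠ 0 := (cden_pos hq j).ne'
        have h2 : (j : ℝ) * (q + 1) + 1 ≠ 0 := (fac_pos hq j).ne'
        push_cast
        field_simp
        ring
      rw [hpart1]
      -- second piece: `y * FF n`
      have hpart2 : y * (∑ j ∈ Finset.range (n + 1),
              (n.choose j : ℝ) * y ^ (n - j) * KK A q j x)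
          = (∑ j ∈ Finset.range (n + 1),
              (n.choose (j + 1) : ℝ) * y ^ (n - j) * KK A q (j + 1) x)
            + ((n + 1).choose 0 : ℝ) * y ^ (n + 1 - 0) * KK A q 0 x := by
        have hg : (∑ j ∈ Finset.range (n + 1),
                (n.choose (j + 1) : ℝ) * y ^ (n - j) * KK A q (j + 1) x)
              + ((n + 1).choose 0 : ℝ) * y ^ (n + 1 - 0) * KK A q 0 x
            = ∑ j ∈ Finset.range (n + 2),
                (n.choose j : ℝ) * y ^ (n + 1 - j) * KK A q j x := by
          rw [Finset.sum_range_succ' (fun j => (n.choose j : ℝ) * y ^ (n + 1 - j) * KK A q j x) (n + 1)]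
          simp [Nat.succ_sub_succ]
        rw [hg, Finset.sum_range_succ (fun j => (n.choose j : ℝ) * y ^ (n + 1 - j) * KK A q j x) (n + 1),
          Finset.mul_sum]
        simp only [Nat.choose_succ_self, Nat.cast_zero, zero_mul, add_zero]
        refine Finset.sum_congr rfl fun j hj => ?_
        have hj' : j ≤ n := Nat.lt_succ_iff.mp (Finset.mem_range.mp hj)
        rw [Nat.succ_sub hj', pow_succ]
        ring
      simp only [FF]
      rw [hpart2]
      ring

/-- `x`-derivative of `FF` (as explicit sum). -/
noncomputable def EE (A q : ℝ) (n : ℕ) (x y : ℝ) : ℝ :=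
  ∑ j ∈ Finset.range (n + 1),
    (n.choose j : ℝ) * y ^ (n - j)
      * (A ^ j / cden q j * ((j : ℝ) * (q + 1) * x ^ ((j : ℝ) * (q + 1) - 1)))

/-- `x^(1-q)` times the `x`-derivative of `FF`. -/
noncomputable def HH (A q : ℝ) (n : ℕ) (x y : ℝ) : ℝ :=
  ∑ j ∈ Finset.range (n + 1),
    (n.choose j : ℝ) * y ^ (n - j) * (A ^ j / cden q j) * ((j : ℝ) * (q + 1))
      * x ^ ((j : ℝ) * (q + 1) - q)

lemma FF_hasDerivAt_x (A q : ℝ) (n : ℕ) (y : ℝ) {x : ℝ} (hx : 0 < x) :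
    HasDerivAt (fun x' => FF A q n x' y) (EE A q n x y) x := by
  have h : HasDerivAt
      (fun x' => ∑ j ∈ Finset.range (n + 1), (n.choose j : ℝ) * y ^ (n - j) * KK A q j x')
      (EE A q n x y) x := by
    apply HasDerivAt.fun_sum
    intro j _
    have hK : HasDerivAt (fun x' : ℝ => KK A q j x')
        (A ^ j / cden q j * ((j : ℝ) * (q + 1) * x ^ ((j : ℝ) * (q + 1) - 1))) x :=
      (Real.hasDerivAt_rpow_const (p := (j : ℝ) * (q + 1)) (Or.inl hx.ne')).const_mul _
    exact hK.const_mul _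
  exact h

lemma x1q_mul_EE (A : ℝ) {q : ℝ} (n : ℕ) (y : ℝ) {x : ℝ} (hx : 0 < x) :
    x ^ (1 - q) * EE A q n x y = HH A q n x y := by
  simp only [EE, HH, Finset.mul_sum]
  refine Finset.sum_congr rfl fun j _ => ?_
  rw [show x ^ ((j : ℝ) * (q + 1) - q)
      = x ^ ((1 : ℝ) - q) * x ^ ((j : ℝ) * (q + 1) - 1) by
    rw [← Real.rpow_add hx]; congr 1; ring]
  ring

lemma HH_hasDerivAt (A q : ℝ) (n : ℕ) (y : ℝ) {x : ℝ} (hx : 0 < x) :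
    HasDerivAt (fun x' => HH A q n x' y)
      (∑ j ∈ Finset.range (n + 1),
        (n.choose j : ℝ) * y ^ (n - j) * (A ^ j / cden q j) * ((j : ℝ) * (q + 1))
          * (((j : ℝ) * (q + 1) - q) * x ^ ((j : ℝ) * (q + 1) - q - 1))) x := by
  apply HasDerivAt.fun_sum
  intro j _
  exact (Real.hasDerivAt_rpow_const (p := (j : ℝ) * (q + 1) - q) (Or.inl hx.ne')).const_mul _

lemma FF_hasDerivAt_y (A q : ℝ) (n : ℕ) (x y : ℝ) :
    HasDerivAt (fun y' => FF A q (n + 1) x y') (((n : ℝ) + 1) * FF A q n x y) y := by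
  have h : HasDerivAt
      (fun y' => ∑ j ∈ Finset.range (n + 2), ((n + 1).choose j : ℝ) * y' ^ (n + 1 - j) * KK A q j x)
      (∑ j ∈ Finset.range (n + 2),
        ((n + 1).choose j : ℝ) * (((n + 1 - j : ℕ) : ℝ) * y ^ (n + 1 - j - 1)) * KK A q j x) y := by
    apply HasDerivAt.fun_sum
    intro j _
    exact ((hasDerivAt_pow (n + 1 - j) y).const_mul _).mul_const _
  have heq : (∑ j ∈ Finset.range (n + 2),
        ((n + 1).choose j : ℝ) * (((n + 1 - j : ℕ) : ℝ) * y ^ (n + 1 - j - 1)) * KK A q j x)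
      = ((n : ℝ) + 1) * FF A q n x y := by
    rw [FF, Finset.mul_sum,
      Finset.sum_range_succ
        (fun j => ((n + 1).choose j : ℝ) * (((n + 1 - j : ℕ) : ℝ) * y ^ (n + 1 - j - 1)) * KK A q j x)
        (n + 1)]
    simp only [Nat.sub_self, Nat.cast_zero, zero_mul, mul_zero, add_zero]
    refine Finset.sum_congr rfl fun j hj => ?_
    have hj' : j ≤ n := Nat.lt_succ_iff.mp (Finset.mem_range.mp hj)
    have hch : (((n + 1).choose j : ℝ)) * (((n + 1 - j : ℕ) : ℝ)) = ((n : ℝ) + 1) * (n.choose j : ℝ) := by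
      rw [← Nat.cast_mul, choose_id n j hj', Nat.cast_mul]
      push_cast
      ring
    have hsub : n + 1 - j - 1 = n - j := by omega
    rw [hsub]
    calc ((n + 1).choose j : ℝ) * (((n + 1 - j : ℕ) : ℝ) * y ^ (n - j)) * KK A q j x
        = (((n + 1).choose j : ℝ) * ((n + 1 - j : ℕ) : ℝ)) * y ^ (n - j) * KK A q j x := by ring
      _ = ((n : ℝ) + 1) * (n.choose j : ℝ) * y ^ (n - j) * KK A q j x := by rw [hch]
      _ = ((n : ℝ) + 1) * ((n.choose j : ℝ) * y ^ (n - j) * KK A q j x) := by ring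
  rw [← heq]
  exact h

lemma HH_deriv_sum_eq (A : ℝ) {q : ℝ} (hq : -1 < q) (n : ℕ) (y : ℝ) {x : ℝ} (hx : 0 < x) :
    (∑ j ∈ Finset.range (n + 2),
        ((n + 1).choose j : ℝ) * y ^ (n + 1 - j) * (A ^ j / cden q j) * ((j : ℝ) * (q + 1))
          * (((j : ℝ) * (q + 1) - q) * x ^ ((j : ℝ) * (q + 1) - q - 1)))
      = A * (q + 1) * (((n : ℝ) + 1) * FF A q n x y) := by
  rw [Finset.sum_range_succ'
      (fun j => ((n + 1).choose j : ℝ) * y ^ (n + 1 - j) * (A ^ j / cden q j) * ((j : ℝ) * (q + 1))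
        * (((j : ℝ) * (q + 1) - q) * x ^ ((j : ℝ) * (q + 1) - q - 1)))
      (n + 1)]
  simp only [Nat.cast_zero, zero_mul, mul_zero, zero_add, add_zero]
  rw [FF, Finset.mul_sum, Finset.mul_sum]
  refine Finset.sum_congr rfl fun k hk => ?_
  have hk' : k ≤ n := Nat.lt_succ_iff.mp (Finset.mem_range.mp hk)
  have hch : (((n + 1).choose (k + 1) : ℝ)) * ((k : ℝ) + 1) = ((n : ℝ) + 1) * (n.choose k : ℝ) := by
    have := Nat.add_one_mul_choose_eq n k
    have h2 : ((n + 1) * n.choose k : ℕ) = ((n + 1).choose (k + 1) * (k + 1) : ℕ) := by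
      simpa using this
    have h3 := congrArg (Nat.cast (R := ℝ)) h2
    push_cast at h3
    linarith [h3]
  have hsub : n + 1 - (k + 1) = n - k := Nat.succ_sub_succ n k
  have hexp : ((k : ℝ) + 1) * (q + 1) - q - 1 = (k : ℝ) * (q + 1) := by ring
  have hfac : ((k : ℝ) + 1) * (q + 1) - q = (k : ℝ) * (q + 1) + 1 := by ring
  have hc1 : cden q k ≠ 0 := (cden_pos hq k).ne'
  have hc2 : (k : ℝ) * (q + 1) + 1 ≠ 0 := (fac_pos hq k).ne'
  simp only [KK, cden, hsub]
  push_cast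
  rw [hexp, hfac]
  field_simp
  linear_combination (y ^ (n - k) * A ^ (k + 1) * (q + 1)) * hch

end Stmt18Aux

/-- `πₙ(x,y)` satisfies the variable-conductivity heat equation
`∂πₙ/∂y = (1/(A(q+1))) D_x (x^{1-q} D_x πₙ)` with `y` as time. -/
theorem stmt18 (A q : ℝ) (hA : A ≠ 0) (hq : -1 < q) :
    ∀ n : ℕ, ∀ x : ℝ, 0 < x → ∀ y : ℝ, y ≠ 0 →
      deriv (fun y' => piMon A q n x y') y
        = (1 / (A * (q + 1))) *
            deriv (fun x' => x' ^ (1 - q) *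
              deriv (fun x'' => piMon A q n x'' y) x') x := by
  intro n
  cases n with
  | zero =>
      intro x hx y hy
      have h1 : (fun y' : ℝ => piMon A q 0 x y') = fun _ => (1 : ℝ) := rfl
      have h2 : (fun x'' : ℝ => piMon A q 0 x'' y) = fun _ => (1 : ℝ) := rfl
      rw [h1, h2]
      simp [deriv_const']
  | succ n =>
      intro x hx y hy
      have hq1 : (0 : ℝ) < q + 1 := by linarith
      have hq1' : q + 1 ≠ 0 := hq1.ne'
      -- left-hand side
      have hL : deriv (fun y' => piMon A q (n + 1) x y') y
          = ((n : ℝ) + 1) * Stmt18Aux.FF A q n x y := by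
        have hfun : (fun y' => piMon A q (n + 1) x y')
            = fun y' => Stmt18Aux.FF A q (n + 1) x y' := by
          funext y'
          exact Stmt18Aux.piMon_eq A hq (n + 1) y' hx
        rw [hfun, (Stmt18Aux.FF_hasDerivAt_y A q n x y).deriv]
      rw [hL]
      -- right-hand side
      have hderivIn : ∀ x' : ℝ, 0 < x' →
          deriv (fun x'' => piMon A q (n + 1) x'' y) x' = Stmt18Aux.EE A q (n + 1) x' y := by
        intro x' hx'
        have hev : (fun x'' => piMon A q (n + 1) x'' y)
            =ᶠ[nhds x'] fun x'' => Stmt18Aux.FF A q (n + 1) x'' y := by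
          filter_upwards [Ioi_mem_nhds hx'] with t ht
          exact Stmt18Aux.piMon_eq A hq (n + 1) y ht
        rw [hev.deriv_eq, (Stmt18Aux.FF_hasDerivAt_x A q (n + 1) y hx').deriv]
      have hev2 : (fun x' => x' ^ (1 - q) * deriv (fun x'' => piMon A q (n + 1) x'' y) x')
          =ᶠ[nhds x] fun x' => Stmt18Aux.HH A q (n + 1) x' y := by
        filter_upwards [Ioi_mem_nhds hx] with x' hx'
        rw [hderivIn x' hx', Stmt18Aux.x1q_mul_EE A (n + 1) y hx']
      rw [hev2.deriv_eq, (Stmt18Aux.HH_hasDerivAt A q (n + 1) y hx).deriv,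
        Stmt18Aux.HH_deriv_sum_eq A hq n y hx]
      field_simp
end
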